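/- Let X = G/P of dimension n, f : Z → X a simple covering of degree N with respect to L = O_X(d), and ω_X = O_X(−d_0). If d(N−1) − d_0 > μ or d(N−1) − d_0 > n−1, where μ = max{(α,δ)/c : α ∈ Φ⁺}, then for all s = 0,…,n−2 and all i = 0,…,N−1: H^{s+1}(X, Ω^{n−s}_X ⊗ L^{(n−s)N−1−i} ⊗ ω_X) = 0 and H^{s+1}(X, Ω^{n−s−1}_X ⊗ L^{(n−s)N−2−i} ⊗ ω_X) = 0. -/
import Mathlib


/-- Let `X = G/P` of dimension `n`, `f : Z → X` a simple covering of degree `N` with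
respect to `L = O_X(d)`, and `ω_X = O_X(−d_0)`.  If `d(N−1) − d_0 > μ` or
`d(N−1) − d_0 > n−1`, where `μ = max {(α,δ)/c : α ∈ Φ⁺}`, then for all
`s = 0, …, n−2` and all `i = 0, …, N−1`:
`H^{s+1}(X, Ω^{n−s}_X ⊗ L^{(n−s)N−1−i} ⊗ ω_X) = 0` and
`H^{s+1}(X, Ω^{n−s−1}_X ⊗ L^{(n−s)N−2−i} ⊗ ω_X) = 0`.

Here `Hcoh i q k` models the cohomology group `H^i(X, Ω^q_X ⊗ O_X(k))` (so that
`Ω^q ⊗ L^m ⊗ ω_X = Ω^q(d·m − d_0)`), and the Bott-type vanishing lemma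
`H^i(X, Ω^q(k)) = 0` for `i > 0` when `k > μ` or `k > q` is the hypothesis `hBott`. -/
theorem vanishing_for_torelli
    (n d d0 N : ℕ) (hn : 2 ≤ n) (hd : 0 < d) (hN : 2 ≤ N)
    (μ : ℝ)
    (Hcoh : ℕ → ℕ → ℤ → Type)
    -- the Bott-type vanishing lemma on `X = G/P`
    (hBott : ∀ (i q : ℕ) (k : ℤ), 0 < i → (μ < (k : ℝ) ∨ (q : ℤ) < k) →
      Subsingleton (Hcoh i q k))
    -- the numerical hypothesis `d(N−1) − d_0 > μ` or `d(N−1) − d_0 > n−1`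
    (h : μ < (((d : ℤ) * ((N : ℤ) - 1) - d0 : ℤ) : ℝ) ∨
      (n : ℤ) - 1 < (d : ℤ) * ((N : ℤ) - 1) - d0) :
    ∀ s : ℕ, s ≤ n - 2 → ∀ i : ℕ, i ≤ N - 1 →
      Subsingleton (Hcoh (s + 1) (n - s)
        ((d : ℤ) * (((n : ℤ) - s) * N - 1 - i) - d0)) ∧
      Subsingleton (Hcoh (s + 1) (n - s - 1)
        ((d : ℤ) * (((n : ℤ) - s) * N - 2 - i) - d0)) := by
  intro s hs i hi
  have hA : (2 : ℤ) ≤ (n : ℤ) - s := by omega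
  have hi' : (i : ℤ) ≤ (N : ℤ) - 1 := by omega
  have hN' : (2 : ℤ) ≤ (N : ℤ) := by omega
  have hd' : (1 : ℤ) ≤ (d : ℤ) := by omega
  -- key: ((n-s)N - 2 - i) ≥ N - 1
  have hmul : (2 : ℤ) * N ≤ ((n : ℤ) - s) * N :=
    mul_le_mul_of_nonneg_right hA (by omega)
  have h1 : (N : ℤ) - 1 ≤ ((n : ℤ) - s) * N - 2 - i := by linarith
  have h0 : (N : ℤ) ≤ ((n : ℤ) - s) * N - 1 - i := by linarith
  have hk2 : (d : ℤ) * ((N : ℤ) - 1) - d0 ≤ (d : ℤ) * (((n : ℤ) - s) * N - 2 - i) - d0 := by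
    have := mul_le_mul_of_nonneg_left h1 (by omega : (0:ℤ) ≤ (d:ℤ))
    linarith
  have hk1 : (d : ℤ) * ((N : ℤ) - 1) - d0 + d ≤ (d : ℤ) * (((n : ℤ) - s) * N - 1 - i) - d0 := by
    have := mul_le_mul_of_nonneg_left h0 (by omega : (0:ℤ) ≤ (d:ℤ))
    nlinarith
  have hq1 : ((n - s : ℕ) : ℤ) = (n : ℤ) - s := by omega
  have hq2 : ((n - s - 1 : ℕ) : ℤ) = (n : ℤ) - s - 1 := by omega
  constructor
  · refine hBott _ _ _ (Nat.succ_pos s) ?_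
    rcases h with h | h
    · left
      have hle : (d : ℤ) * ((N : ℤ) - 1) - d0 ≤ (d : ℤ) * (((n : ℤ) - s) * N - 1 - i) - d0 := by
        linarith
      have hc := (Int.cast_le (R := ℝ)).mpr hle
      linarith
    · right
      rw [hq1]
      omega
  · refine hBott _ _ _ (Nat.succ_pos s) ?_
    rcases h with h | h
    · left
      have hc := (Int.cast_le (R := ℝ)).mpr hk2
      linarith
    · right
      rw [hq2]
      omega
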